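/- Let h(w,z) = −(1/√(2π)) ∫_{−∞}^{Re(w)} Li_{1/2}(z e^{(w² − (x + i·Im(w))²)/2}) dx for a complex number w with Re(w) < 0. Then for all such w and all complex z with |z| ≤ 1/2, one has |h(w,z)| ≤ |z|. -/

import Mathlib

open MeasureTheory Set Real

/-- The polylogarithm of order `s`, `Li_s(ζ) = ∑_{n ≥ 1} ζⁿ/n^s`. -/
noncomputable def polylog (s : ℝ) (ζ : ℂ) : ℂ :=
  ∑' n : ℕ, ζ ^ (n + 1) / ((((n : ℝ) + 1) ^ s : ℝ) : ℂ)

lemma polylog_bound (ζ : ℂ) (hζ : ‖ζ‖ ≤ 1 / 2) : ‖polylog (1 / 2) ζ‖ ≤ 2 * ‖ζ‖ := by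
  have hsum : HasSum (fun n : ℕ => ‖ζ‖ * (1/2 : ℝ) ^ n) (‖ζ‖ * 2) := by
    have := (hasSum_geometric_of_lt_one (by norm_num : (0:ℝ) ≤ 1/2) (by norm_num)).mul_left ‖ζ‖
    rw [show (‖ζ‖ * 2) = ‖ζ‖ * (1 - 1/2 : ℝ)⁻¹ by norm_num]
    exact this
  have hb : ∀ n : ℕ, ‖ζ ^ (n + 1) / ((((n : ℝ) + 1) ^ (1/2 : ℝ) : ℝ) : ℂ)‖ ≤ ‖ζ‖ * (1/2) ^ n := by
    intro n
    have h1 : (1 : ℝ) ≤ ((n : ℝ) + 1) ^ (1/2 : ℝ) :=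
      Real.one_le_rpow (by linarith [Nat.cast_nonneg (α := ℝ) n]) (by norm_num)
    rw [norm_div, norm_pow, Complex.norm_real, Real.norm_eq_abs,
      abs_of_nonneg (Real.rpow_nonneg (by positivity) _)]
    calc ‖ζ‖ ^ (n + 1) / ((n : ℝ) + 1) ^ (1/2 : ℝ)
        ≤ ‖ζ‖ ^ (n + 1) / 1 := by
          apply div_le_div_of_nonneg_left (by positivity) one_pos h1
      _ = ‖ζ‖ * ‖ζ‖ ^ n := by ring
      _ ≤ ‖ζ‖ * (1/2) ^ n := by
          exact mul_le_mul_of_nonneg_left (pow_le_pow_left₀ (norm_nonneg _) hζ n)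
            (norm_nonneg _)
  calc ‖polylog (1/2) ζ‖ ≤ ‖ζ‖ * 2 := tsum_of_norm_bounded hsum hb
    _ = 2 * ‖ζ‖ := by ring

lemma gauss_half (a : ℝ) :
    ∫ x in Iio a, Real.exp (-(1/2) * (x - a) ^ 2) = Real.sqrt (2 * π) / 2 := by
  have key := (measurePreserving_add_right (volume : Measure ℝ) a).setIntegral_preimage_emb
    (measurableEmbedding_addRight a) (fun y => Real.exp (-(1/2) * (y - a) ^ 2)) (Iio a)
  rw [preimage_add_const_Iio, sub_self] at key
  simp only [add_sub_cancel_right] at key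
  rw [← key]
  have neg : ∫ x in Iio (0:ℝ), Real.exp (-(1/2) * x ^ 2)
      = ∫ x in Ioi (0:ℝ), Real.exp (-(1/2) * x ^ 2) := by
    rw [← integral_Iic_eq_integral_Iio, ← neg_zero (G := ℝ), ← integral_comp_neg_Iic]
    simp
  rw [neg, integral_gaussian_Ioi]
  norm_num [mul_comm]

/-- `h(w,z) = −(1/√(2π)) ∫_{−∞}^{Re w} Li_{1/2}(z e^{(w² − (x + i Im w)²)/2}) dx`. -/
noncomputable def hfun (w z : ℂ) : ℂ :=
  -(1 / (Real.sqrt (2 * Real.pi) : ℂ)) *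
    ∫ x in Set.Iio w.re,
      polylog (1 / 2) (z * Complex.exp ((w ^ 2 - ((x : ℂ) + (w.im : ℂ) * Complex.I) ^ 2) / 2))

/-- For `Re w < 0` and `|z| ≤ 1/2`, `|h(w,z)| ≤ |z|`. -/
theorem stmt4 (w z : ℂ) (hw : w.re < 0) (hz : ‖z‖ ≤ 1 / 2) :
    ‖hfun w z‖ ≤ ‖z‖ := by
  set a := w.re with ha
  have hsqrt : (0:ℝ) < Real.sqrt (2 * π) := Real.sqrt_pos.mpr (by positivity)
  have hre : ∀ x : ℝ, ((w ^ 2 - ((x : ℂ) + (w.im : ℂ) * Complex.I) ^ 2) / 2).re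
      = (a ^ 2 - x ^ 2) / 2 := by
    intro x
    simp [Complex.div_re, Complex.sub_re, pow_two, Complex.mul_re, Complex.mul_im,
      Complex.add_re, Complex.add_im, Complex.normSq, Complex.I_re, Complex.I_im]
    try ring
  set F : ℝ → ℂ := fun x =>
    polylog (1 / 2) (z * Complex.exp ((w ^ 2 - ((x : ℂ) + (w.im : ℂ) * Complex.I) ^ 2) / 2))
  set g : ℝ → ℝ := fun x => 2 * ‖z‖ * Real.exp (-(1/2) * (x - a) ^ 2)
  have hg : IntegrableOn g (Iio a) := by
    have : Integrable (fun x : ℝ => Real.exp (-(1/2) * (x - a) ^ 2)) :=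
      (integrable_exp_neg_mul_sq (by norm_num : (0:ℝ) < 1/2)).comp_sub_right a
    exact (this.const_mul (2 * ‖z‖)).integrableOn
  have hbd : ∀ᵐ x ∂(volume.restrict (Iio a)), ‖F x‖ ≤ g x := by
    filter_upwards [ae_restrict_mem measurableSet_Iio] with x hx
    have hx2 : a ^ 2 ≤ x ^ 2 := by nlinarith [(mem_Iio.mp hx).le, hw]
    have hnorm : ‖z * Complex.exp ((w ^ 2 - ((x : ℂ) + (w.im : ℂ) * Complex.I) ^ 2) / 2)‖
        = ‖z‖ * Real.exp ((a ^ 2 - x ^ 2) / 2) := by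
      rw [norm_mul, Complex.norm_exp, hre]
    have hle : ‖z * Complex.exp ((w ^ 2 - ((x : ℂ) + (w.im : ℂ) * Complex.I) ^ 2) / 2)‖ ≤ 1/2 := by
      rw [hnorm]
      calc ‖z‖ * Real.exp ((a ^ 2 - x ^ 2) / 2) ≤ ‖z‖ * 1 := by
            apply mul_le_mul_of_nonneg_left _ (norm_nonneg _)
            rw [← Real.exp_zero]
            exact Real.exp_le_exp.mpr (by linarith)
        _ ≤ 1/2 := by simpa using hz
    calc ‖F x‖ ≤ 2 * ‖z * Complex.exp ((w ^ 2 - ((x : ℂ) + (w.im : ℂ) * Complex.I) ^ 2) / 2)‖ :=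
          polylog_bound _ hle
      _ = 2 * ‖z‖ * Real.exp ((a ^ 2 - x ^ 2) / 2) := by rw [hnorm]; ring
      _ ≤ g x := by
          apply mul_le_mul_of_nonneg_left _ (by positivity)
          apply Real.exp_le_exp.mpr
          nlinarith [(mem_Iio.mp hx).le, hw]
  have hI : ‖∫ x in Iio a, F x‖ ≤ ∫ x in Iio a, g x :=
    norm_integral_le_of_norm_le hg hbd
  have hgint : ∫ x in Iio a, g x = 2 * ‖z‖ * (Real.sqrt (2 * π) / 2) := by
    simp only [g]
    rw [integral_const_mul, gauss_half]
  have hc : ‖-(1 / (Real.sqrt (2 * π) : ℂ))‖ = 1 / Real.sqrt (2 * π) := by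
    rw [norm_neg, norm_div, norm_one, Complex.norm_real, Real.norm_eq_abs,
      abs_of_pos hsqrt]
  calc ‖hfun w z‖ = ‖-(1 / (Real.sqrt (2 * π) : ℂ))‖ * ‖∫ x in Iio a, F x‖ := by
        rw [hfun, norm_mul]
    _ ≤ (1 / Real.sqrt (2 * π)) * (2 * ‖z‖ * (Real.sqrt (2 * π) / 2)) := by
        rw [hc]; exact mul_le_mul_of_nonneg_left (hgint ▸ hI) (by positivity)
    _ = ‖z‖ := by field_simp
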